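/- If G is a chain graph without isolated vertices, then γ_gr(G) ∈ {α(G), α(G) + 1}, where α(G) is the independence number of G. -/

import Mathlib

open Finset

variable {V : Type*}

/-- The closed neighborhood of a vertex. -/
def CN (G : SimpleGraph V) (v : V) : Set V := insert v (G.neighborSet v)

/-- A closed neighborhood (legal) sequence: distinct vertices, each footprinting
a vertex not dominated by the closed neighborhoods of earlier vertices. -/
def IsCNSeq (G : SimpleGraph V) (S : List V) : Prop :=
  S.Nodup ∧ ∀ i : Fin S.length, ∃ u, u ∈ CN G (S.get i) ∧
    ∀ j : Fin S.length, j < i → u ∉ CN G (S.get j)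

/-- A dominating sequence: a closed neighborhood sequence whose vertex set dominates. -/
def IsDomSeq (G : SimpleGraph V) (S : List V) : Prop :=
  IsCNSeq G S ∧ ∀ v : V, ∃ u ∈ S, v ∈ CN G u

/-- The Grundy domination number: the maximum length of a dominating sequence. -/
noncomputable def grundyDom (G : SimpleGraph V) : ℕ :=
  sSup {n | ∃ S : List V, IsDomSeq G S ∧ S.length = n}

/-- An independent set of a graph. -/
def IsIndep (G : SimpleGraph V) (s : Set V) : Prop := ∀ u ∈ s, ∀ v ∈ s, ¬ G.Adj u v

/-- The independence number: the maximum size of an independent set. -/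
noncomputable def indepNum [Fintype V] (G : SimpleGraph V) : ℕ :=
  sSup {n | ∃ s : Finset V, IsIndep G ↑s ∧ s.card = n}

/- ------------------------------------------------------------------ -/
/-  Auxiliary lemmas                                                   -/
/- ------------------------------------------------------------------ -/

lemma mem_CN_self (G : SimpleGraph V) (v : V) : v ∈ CN G v :=
  Set.mem_insert _ _

lemma adj_mem_CN {G : SimpleGraph V} {u v : V} (h : G.Adj u v) : v ∈ CN G u :=
  Set.mem_insert_of_mem _ h

lemma CN_cases {G : SimpleGraph V} {u v : V} (h : v ∈ CN G u) : v = u ∨ G.Adj u v := by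
  rcases h with h | h
  · exact Or.inl h
  · exact Or.inr h

section Chain

variable [Fintype V] [DecidableEq V]
variable (G : SimpleGraph V) (X Y : Finset V)
variable (hcover : X ∪ Y = Finset.univ)
variable (hXind : ∀ x ∈ X, ∀ x' ∈ X, ¬ G.Adj x x')
variable (hYind : ∀ y ∈ Y, ∀ y' ∈ Y, ¬ G.Adj y y')
variable (hchain : ∀ x ∈ X, ∀ x' ∈ X,
      G.neighborSet x ⊆ G.neighborSet x' ∨ G.neighborSet x' ⊆ G.neighborSet x)

include hcover in
lemma mem_X_or_Y (v : V) : v ∈ X ∨ v ∈ Y := by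
  have : v ∈ X ∪ Y := by rw [hcover]; exact Finset.mem_univ v
  exact Finset.mem_union.1 this

include hcover hXind hYind in
lemma adj_sides {u v : V} (h : G.Adj u v) :
    (u ∈ X ∧ v ∈ Y) ∨ (u ∈ Y ∧ v ∈ X) := by
  rcases mem_X_or_Y X Y hcover u with hu | hu <;>
    rcases mem_X_or_Y X Y hcover v with hv | hv
  · exact absurd h (hXind u hu v hv)
  · exact Or.inl ⟨hu, hv⟩
  · exact Or.inr ⟨hu, hv⟩
  · exact absurd h (hYind u hu v hv)

include hcover hXind hYind hchain in
/-- Neighborhoods of vertices of `Y` are also linearly ordered by inclusion. -/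
lemma ychain : ∀ y ∈ Y, ∀ y' ∈ Y,
    G.neighborSet y ⊆ G.neighborSet y' ∨ G.neighborSet y' ⊆ G.neighborSet y := by
  intro y hy y' hy'
  by_contra hcon
  push_neg at hcon
  obtain ⟨⟨x, hx, hx'⟩, ⟨x', hx2, hx2'⟩⟩ :
      (∃ a ∈ G.neighborSet y, a ∉ G.neighborSet y') ∧
      (∃ a ∈ G.neighborSet y', a ∉ G.neighborSet y) := by
    constructor
    · exact Set.not_subset.1 hcon.1
    · exact Set.not_subset.1 hcon.2
  have hadjx : G.Adj y x := hx
  have hadjx' : G.Adj y' x' := hx2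
  have hxX : x ∈ X := by
    rcases mem_X_or_Y X Y hcover x with h | h
    · exact h
    · exact absurd hadjx (hYind y hy x h)
  have hx'X : x' ∈ X := by
    rcases mem_X_or_Y X Y hcover x' with h | h
    · exact h
    · exact absurd hadjx' (hYind y' hy' x' h)
  rcases hchain x hxX x' hx'X with hss | hss
  · have : y ∈ G.neighborSet x' := hss hadjx.symm
    exact hx2' ((SimpleGraph.mem_neighborSet _ _ _).1 this).symm
  · have : y' ∈ G.neighborSet x := hss hadjx'.symm
    exact hx' ((SimpleGraph.mem_neighborSet _ _ _).1 this).symm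

include hcover hXind hYind hchain in
/-- Neighborhoods of two vertices on the same side are comparable. -/
lemma same_side_comp {u v : V}
    (h : (u ∈ X ∧ v ∈ X) ∨ (u ∈ Y ∧ v ∈ Y)) :
    G.neighborSet u ⊆ G.neighborSet v ∨ G.neighborSet v ⊆ G.neighborSet u := by
  rcases h with ⟨hu, hv⟩ | ⟨hu, hv⟩
  · exact hchain u hu v hv
  · exact ychain G X Y hcover hXind hYind hchain u hu v hv

include hcover hXind hYind hchain in
/-- The core lemma: if some pick before `t'` was already dominated at its pick time,
then the footprint at `t'` has no adjacent later footprint. -/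
lemma core_lemma (S : List V) (hnd : S.Nodup)
    (f : Fin S.length → V)
    (hf2 : ∀ i j : Fin S.length, j < i → f i ∉ CN G (S.get j))
    (t t' u' : Fin S.length) (h1 : t < t') (h2 : t' < u')
    (j : Fin S.length) (hj : j < t) (hdom : S.get t ∈ CN G (S.get j))
    (hadj : G.Adj (f t') (f u')) : False := by
  -- the pick at time t was dominated: it is adjacent to the earlier pick at j
  have hne : S.get t ≠ S.get j := by
    intro h
    have := (List.Nodup.get_inj_iff hnd).1 h
    exact absurd this (ne_of_gt hj)
  have hpr : G.Adj (S.get j) (S.get t) := by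
    rcases CN_cases hdom with h | h
    · exact absurd h hne
    · exact h
  -- key sub-argument, applied with (mz, mo) = picks with mz on same side as f t'
  have key : ∀ mz mo : Fin S.length, mz < t' → mo < t' →
      G.Adj (S.get mo) (S.get mz) →
      ((S.get mz ∈ X ∧ f t' ∈ X) ∨ (S.get mz ∈ Y ∧ f t' ∈ Y)) → False := by
    intro mz mo hmz hmo hadj_oz hsame
    rcases same_side_comp G X Y hcover hXind hYind hchain hsame with hzb | hbz
    · -- N(z) ⊆ N(f t') :  o ∈ N(z) ⊆ N(f t'), so f t' adjacent to pick o, contradiction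
      have h1' : S.get mo ∈ G.neighborSet (S.get mz) := hadj_oz.symm
      have h2' : S.get mo ∈ G.neighborSet (f t') := hzb h1'
      have h3' : G.Adj (f t') (S.get mo) := h2'
      exact hf2 t' mo hmo (adj_mem_CN h3'.symm)
    · -- N(f t') ⊆ N(z) : f u' ∈ N(z), so f u' dominated by pick mz < u', contradiction
      have h1' : f u' ∈ G.neighborSet (f t') := hadj
      have h2' : f u' ∈ G.neighborSet (S.get mz) := hbz h1'
      exact hf2 u' mz (hmz.trans h2) (adj_mem_CN h2')
  rcases mem_X_or_Y X Y hcover (f t') with ha | ha <;>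
    rcases adj_sides G X Y hcover hXind hYind hpr with ⟨hjX, htY⟩ | ⟨hjY, htX⟩
  · -- f t' ∈ X, S.get j ∈ X : use z = S.get j, o = S.get t
    exact key j t (hj.trans h1) h1 hpr.symm (Or.inl ⟨hjX, ha⟩)
  · -- f t' ∈ X, S.get t ∈ X : use z = S.get t, o = S.get j
    exact key t j h1 (hj.trans h1) hpr (Or.inl ⟨htX, ha⟩)
  · -- f t' ∈ Y, S.get t ∈ Y
    exact key t j h1 (hj.trans h1) hpr (Or.inr ⟨htY, ha⟩)
  · -- f t' ∈ Y, S.get j ∈ Y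
    exact key j t (hj.trans h1) h1 hpr.symm (Or.inr ⟨hjY, ha⟩)

include hcover hXind hYind hchain in
/-- Upper bound: any legal (closed neighborhood) sequence has length at most `α(G) + 1`. -/
lemma cnseq_len_le (S : List V) (hS : IsCNSeq G S) :
    S.length ≤ indepNum G + 1 := by
  classical
  obtain ⟨hnd, hseq⟩ := hS
  have hBA : BddAbove {n | ∃ s : Finset V, IsIndep G ↑s ∧ s.card = n} := by
    refine ⟨Fintype.card V, ?_⟩
    rintro n ⟨s, _, rfl⟩
    exact s.card_le_univ
  have hindep_le : ∀ T : Finset V, IsIndep G ↑T → T.card ≤ indepNum G := by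
    intro T hT
    exact le_csSup hBA ⟨T, hT, rfl⟩
  choose g hg1 hg2 using hseq
  set f : Fin S.length → V :=
    fun i => if (∀ j : Fin S.length, j < i → S.get i ∉ CN G (S.get j))
      then S.get i else g i with hf
  have hf1 : ∀ i, f i ∈ CN G (S.get i) := by
    intro i
    rw [hf]
    dsimp only
    split
    · exact mem_CN_self G _
    · exact hg1 i
  have hf2 : ∀ i j : Fin S.length, j < i → f i ∉ CN G (S.get j) := by
    intro i j hj
    rw [hf]
    dsimp only
    split
    · next h => exact h j hj
    · exact hg2 i j hj
  have hfself : ∀ i : Fin S.length,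
      (∀ j : Fin S.length, j < i → S.get i ∉ CN G (S.get j)) → f i = S.get i := by
    intro i h
    rw [hf]
    dsimp only
    rw [if_pos h]
  have hfinj : Function.Injective f := by
    intro i j h
    by_contra hne
    rcases lt_or_gt_of_ne hne with hlt | hlt
    · exact hf2 j i hlt (h ▸ hf1 i)
    · exact hf2 i j hlt (h.symm ▸ hf1 j)
  -- main adjacency-freeness argument
  by_cases hD : ∃ i : Fin S.length, ∃ m : Fin S.length, m < i ∧ S.get i ∈ CN G (S.get m)
  · -- there is a dominated pick; remove the earliest one
    set P : ℕ → Prop := fun n => ∃ hn : n < S.length,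
      ∃ m : Fin S.length, (m : ℕ) < n ∧ S.get ⟨n, hn⟩ ∈ CN G (S.get m) with hP
    have hPex : ∃ n, P n := by
      obtain ⟨i, m, hm, hdom⟩ := hD
      exact ⟨i.1, i.2, m, hm, by simpa using hdom⟩
    set n₀ := Nat.find hPex with hn₀
    obtain ⟨hn0lt, m0, hm0, hdom0⟩ := Nat.find_spec hPex
    set i₀ : Fin S.length := ⟨n₀, hn0lt⟩ with hi₀
    have main : ∀ i j : Fin S.length, i < j → i ≠ i₀ → G.Adj (f i) (f j) → False := by
      intro i j hij hine hadj
      by_cases hDi : ∀ m : Fin S.length, m < i → S.get i ∉ CN G (S.get m)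
      · have heq := hfself i hDi
        have : f j ∈ CN G (S.get i) := by
          rw [← heq]
          exact adj_mem_CN hadj
        exact hf2 j i hij this
      · push_neg at hDi
        obtain ⟨m, hm, hdomi⟩ := hDi
        have hPi : P i.1 := ⟨i.2, m, hm, by simpa using hdomi⟩
        have hle : n₀ ≤ i.1 := Nat.find_min' hPex hPi
        have hlt : i₀ < i := by
          have : n₀ ≠ i.1 := by
            intro h
            apply hine
            apply Fin.ext
            simp [hi₀, h]
          exact Fin.lt_def.2 (lt_of_le_of_ne hle this)
        exact core_lemma G X Y hcover hXind hYind hchain S hnd f hf2 i₀ i j hlt hij m0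
          (Fin.lt_def.2 hm0) hdom0 hadj
    set T : Finset V := Finset.image f (Finset.univ.erase i₀) with hT
    have hTcard : T.card = S.length - 1 := by
      rw [hT, Finset.card_image_of_injective _ hfinj, Finset.card_erase_of_mem (Finset.mem_univ _)]
      simp
    have hTind : IsIndep G ↑T := by
      intro u hu v hv hadj
      simp only [hT, Finset.coe_image, Set.mem_image, Finset.mem_coe,
        Finset.mem_erase, Finset.mem_univ, and_true] at hu hv
      obtain ⟨i, hine, rfl⟩ := hu
      obtain ⟨j, hjne, rfl⟩ := hv
      rcases lt_trichotomy i j with h | h | h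
      · exact main i j h hine hadj
      · rw [h] at hadj
        exact G.irrefl hadj
      · exact main j i h hjne hadj.symm
    have := hindep_le T hTind
    rw [hTcard] at this
    have hpos : 0 < S.length := lt_of_le_of_lt (Nat.zero_le _) hn0lt
    omega
  · -- no pick was ever dominated : all footprints form an independent set
    push_neg at hD
    set T : Finset V := Finset.image f Finset.univ with hT
    have hTcard : T.card = S.length := by
      rw [hT, Finset.card_image_of_injective _ hfinj]
      simp
    have main : ∀ i j : Fin S.length, i < j → G.Adj (f i) (f j) → False := by
      intro i j hij hadj
      have hDi : ∀ m : Fin S.length, m < i → S.get i ∉ CN G (S.get m) := by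
        intro m hm hmem
        exact hD i m hm hmem
      have heq := hfself i hDi
      have : f j ∈ CN G (S.get i) := by
        rw [← heq]
        exact adj_mem_CN hadj
      exact hf2 j i hij this
    have hTind : IsIndep G ↑T := by
      intro u hu v hv hadj
      simp only [hT, Finset.coe_image, Set.mem_image, Finset.mem_coe,
        Finset.mem_univ, true_and, Set.mem_setOf_eq] at hu hv
      obtain ⟨i, rfl⟩ := hu
      obtain ⟨j, rfl⟩ := hv
      rcases lt_trichotomy i j with h | h | h
      · exact main i j h hadj
      · rw [h] at hadj
        exact G.irrefl hadj
      · exact main j i h hadj.symm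
    have := hindep_le T hTind
    omega

end Chain

/-- For a chain graph without isolated vertices, `γ_gr(G) ∈ {α(G), α(G) + 1}`. -/
theorem chain_grundyDom_eq_indep_or_succ {V : Type*} [Fintype V] [DecidableEq V]
    (G : SimpleGraph V) (X Y : Finset V)
    (hXY : Disjoint X Y) (hcover : X ∪ Y = Finset.univ)
    (hXind : ∀ x ∈ X, ∀ x' ∈ X, ¬ G.Adj x x')
    (hYind : ∀ y ∈ Y, ∀ y' ∈ Y, ¬ G.Adj y y')
    (hchain : ∀ x ∈ X, ∀ x' ∈ X,
      G.neighborSet x ⊆ G.neighborSet x' ∨ G.neighborSet x' ⊆ G.neighborSet x)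
    (hiso : ∀ v : V, ∃ u, G.Adj v u) :
    grundyDom G = indepNum G ∨ grundyDom G = indepNum G + 1 := by
  classical
  set A : Set ℕ := {n | ∃ s : Finset V, IsIndep G ↑s ∧ s.card = n} with hA
  set B : Set ℕ := {n | ∃ S : List V, IsDomSeq G S ∧ S.length = n} with hB
  have hBA : BddAbove A := by
    refine ⟨Fintype.card V, ?_⟩
    rintro n ⟨s, _, rfl⟩
    exact s.card_le_univ
  have hBB : BddAbove B := by
    refine ⟨Fintype.card V, ?_⟩
    rintro n ⟨S, hS, rfl⟩
    exact List.Nodup.length_le_card hS.1.1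
  have hA0 : (0 : ℕ) ∈ A := by
    refine ⟨∅, ?_, by simp⟩
    intro u hu
    simp at hu
  have hαmem : indepNum G ∈ A := Nat.sSup_mem ⟨0, hA0⟩ hBA
  obtain ⟨s, hsind, hscard⟩ := hαmem
  -- a maximum independent set dominates the graph
  have hdom : ∀ v : V, ∃ u ∈ s, v ∈ CN G u := by
    intro v
    by_contra hc
    push_neg at hc
    have hvs : v ∉ s := fun h => hc v h (mem_CN_self G v)
    have hins : IsIndep G ↑(insert v s) := by
      intro a ha b hb hadj
      simp only [Finset.coe_insert, Set.mem_insert_iff, Finset.mem_coe] at ha hb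
      rcases ha with rfl | ha <;> rcases hb with rfl | hb
      · exact G.irrefl hadj
      · exact hc b hb (adj_mem_CN hadj.symm)
      · exact hc a ha (adj_mem_CN hadj)
      · exact hsind a ha b hb hadj
    have hmem : s.card + 1 ∈ A := by
      refine ⟨insert v s, hins, ?_⟩
      rw [Finset.card_insert_of_notMem hvs]
    have hle := le_csSup hBA hmem
    have hAS : sSup A = indepNum G := rfl
    rw [hscard, hAS] at hle
    omega
  -- the list of a maximum independent set is a dominating sequence
  set L : List V := s.toList with hL
  have hLnd : L.Nodup := Finset.nodup_toList s
  have hLmem : ∀ i : Fin L.length, L.get i ∈ s := by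
    intro i
    rw [← Finset.mem_toList, ← hL]
    exact List.get_mem L i
  have hLseq : IsDomSeq G L := by
    refine ⟨⟨hLnd, ?_⟩, ?_⟩
    · intro i
      refine ⟨L.get i, mem_CN_self G _, ?_⟩
      intro j hj hmem
      rcases CN_cases hmem with h | h
      · have := (List.Nodup.get_inj_iff hLnd).1 h
        exact absurd this (ne_of_lt hj).symm
      · exact hsind (L.get j) (hLmem j) (L.get i) (hLmem i) h
    · intro v
      obtain ⟨u, hu, hv⟩ := hdom v
      exact ⟨u, Finset.mem_toList.2 hu, hv⟩
  have hLlen : L.length = indepNum G := by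
    rw [hL, Finset.length_toList, hscard]
  have hBS : sSup B = grundyDom G := rfl
  have h1 : indepNum G ≤ grundyDom G := by
    rw [← hBS]
    exact le_csSup hBB (show indepNum G ∈ B from ⟨L, hLseq, hLlen⟩)
  have h2 : grundyDom G ≤ indepNum G + 1 := by
    rw [← hBS]
    have hBne : B.Nonempty := ⟨indepNum G, L, hLseq, hLlen⟩
    apply csSup_le hBne
    rintro n ⟨S, hS, rfl⟩
    exact cnseq_len_le G X Y hcover hXind hYind hchain S hS.1
  omega
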